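/- arXiv:math/0209059 — 7 statements merged into one kernel-verified Lean document; each statement's English description precedes it below -/
import Mathlib

section
/- Let X be a vector space over a field F and let A, B : X → X be linear operators each of rank at least 2. If for every x ∈ X the vectors Ax and Bx are linearly dependent, then A and B are linearly dependent operators. -/
section Aux

variable {F X : Type*} [Field F] [AddCommGroup X] [Module F X]

lemma aux_dep_pair {u v : X} (h : ¬ LinearIndependent F ![u, v]) (hu : u ≠ 0) :
    ∃ c : F, v = c • u := by
  rw [LinearIndependent.pair_iff] at h
  push_neg at h
  obtain ⟨s, t, hst, hne⟩ := h
  by_cases ht : t = 0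
  · exfalso
    subst ht
    simp only [zero_smul, add_zero] at hst
    rcases smul_eq_zero.mp hst with hs | h0
    · exact (hne hs) rfl
    · exact hu h0
  · refine ⟨-(t⁻¹ * s), ?_⟩
    have h2 := congrArg (fun w => t⁻¹ • w) hst
    simp only [smul_add, smul_smul, inv_mul_cancel₀ ht, one_smul, smul_zero] at h2
    have := eq_neg_of_add_eq_zero_right h2
    rwa [← neg_smul] at this

lemma aux_rank (A : X →ₗ[F] X) (hA : 2 ≤ Module.rank F (LinearMap.range A)) (w : X)
    (hw : ∀ x, A x ∈ Submodule.span F ({w} : Set X)) : False := by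
  have hle : LinearMap.range A ≤ Submodule.span F ({w} : Set X) := by
    rintro y ⟨x, rfl⟩; exact hw x
  have h1 := Submodule.rank_mono (R := F) hle
  have h2 : Module.rank F (Submodule.span F ({w} : Set X)) ≤ 1 := by
    simpa using rank_span_le (R := F) ({w} : Set X)
  have := hA.trans (h1.trans h2)
  norm_num at this

lemma aux_key {u w : X} (hu : u ≠ 0) (hw : w ∉ Submodule.span F ({u} : Set X)) {c d e : F}
    (heq : c • u + d • w = e • u + e • w) : c = e ∧ d = e := by
  have h1 : (c - e) • u = (e - d) • w := by
    rw [sub_smul, sub_smul, sub_eq_sub_iff_add_eq_add, add_comm (e • w) (e • u)]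
    exact heq
  by_cases hd : d = e
  · subst hd
    rw [sub_self, zero_smul] at h1
    rcases smul_eq_zero.mp h1 with h0 | h0
    · exact ⟨sub_eq_zero.mp h0, rfl⟩
    · exact absurd h0 hu
  · exfalso
    apply hw
    have hed : e - d ≠ 0 := sub_ne_zero.mpr (Ne.symm hd)
    rw [Submodule.mem_span_singleton]
    exact ⟨(e - d)⁻¹ * (c - e), by
      rw [mul_smul, h1, smul_smul, inv_mul_cancel₀ hed, one_smul]⟩

end Aux

theorem stmt_0 {F X : Type*} [Field F] [AddCommGroup X] [Module F X]
    (A B : X →ₗ[F] X)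
    (hA : 2 ≤ Module.rank F (LinearMap.range A))
    (hB : 2 ≤ Module.rank F (LinearMap.range B))
    (h : ∀ x : X, ¬ LinearIndependent F ![A x, B x]) :
    ¬ LinearIndependent F ![A, B] := by
  classical
  -- kernel of A is contained in kernel of B
  have hker : ∀ x, A x = 0 → B x = 0 := by
    intro x hx
    by_contra hBx
    apply aux_rank A hA (B x)
    intro y
    by_cases hy : A y = 0
    · rw [hy]; exact Submodule.zero_mem _
    · obtain ⟨cc, hc⟩ := aux_dep_pair (h (x + y)) (by rwa [map_add, hx, zero_add])
      obtain ⟨d, hd⟩ := aux_dep_pair (h y) hy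
      rw [map_add, map_add, hx, zero_add, hd] at hc
      -- hc : B x + d • A y = cc • A y
      have hBxy : B x = (cc - d) • A y := by
        rw [sub_smul, ← hc]; abel
      have hcd : cc - d ≠ 0 := by
        intro h0; rw [h0, zero_smul] at hBxy; exact hBx hBxy
      rw [Submodule.mem_span_singleton]
      exact ⟨(cc - d)⁻¹, by rw [hBxy, smul_smul, inv_mul_cancel₀ hcd, one_smul]⟩
  have hBA : ∀ x, ∃ c : F, B x = c • A x := by
    intro x
    by_cases hx : A x = 0
    · exact ⟨0, by rw [hker x hx, hx, smul_zero]⟩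
    · exact aux_dep_pair (h x) hx
  have main : ∀ p y : X, A p ≠ 0 → A y ∉ Submodule.span F ({A p} : Set X) →
      ∀ c d : F, B p = c • A p → B y = d • A y → d = c := by
    intro p y hp hy c d hc hd
    obtain ⟨e, he⟩ := hBA (p + y)
    have heq : c • A p + d • A y = e • A p + e • A y := by
      rw [← smul_add, ← hc, ← hd, ← map_add, ← map_add]
      exact he
    obtain ⟨h1, h2⟩ := aux_key hp hy heq
    rw [h1, h2]
  obtain ⟨x0, hx0⟩ : ∃ x0, A x0 ≠ 0 := by
    by_contra hc
    push_neg at hc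
    exact aux_rank A hA 0 (fun x => by rw [hc x]; exact Submodule.zero_mem _)
  obtain ⟨c, hc⟩ := hBA x0
  obtain ⟨z, hz⟩ : ∃ z, A z ∉ Submodule.span F ({A x0} : Set X) := by
    by_contra hcon
    push_neg at hcon
    exact aux_rank A hA (A x0) hcon
  have hAz : A z ≠ 0 := fun h0 => hz (h0 ▸ Submodule.zero_mem _)
  obtain ⟨cz, hcz⟩ := hBA z
  have hcz' : cz = c := main x0 z hx0 hz c cz hc hcz
  rw [hcz'] at hcz
  have hfin : ∀ y, B y = c • A y := by
    intro y
    obtain ⟨d, hd⟩ := hBA y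
    by_cases hy0 : A y = 0
    · rw [hker y hy0, hy0, smul_zero]
    · by_cases hy : A y ∈ Submodule.span F ({A x0} : Set X)
      · have hzy : A y ∉ Submodule.span F ({A z} : Set X) := by
          intro hmem
          apply hz
          rw [Submodule.mem_span_singleton] at hmem hy ⊢
          obtain ⟨s, hs⟩ := hmem
          obtain ⟨t, htt⟩ := hy
          have hs0 : s ≠ 0 := by
            intro h0; rw [h0, zero_smul] at hs; exact hy0 hs.symm
          exact ⟨s⁻¹ * t, by
            rw [mul_smul, htt, ← hs, smul_smul, inv_mul_cancel₀ hs0, one_smul]⟩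
        rw [hd, main z y hAz hzy c d hcz hd]
      · rw [hd, main x0 y hx0 hy c d hc hd]
  intro hind
  rw [LinearIndependent.pair_iff] at hind
  have h0 : c • A + (-1 : F) • B = 0 := by
    ext y
    simp [hfin y]
  obtain ⟨-, h1⟩ := hind c (-1) h0
  exact (by norm_num : (-1 : F) ≠ 0) h1
end

section
/- Let F be a field and φ : Mₙ(F) → Mₙ(F) a map (no linearity assumed) satisfying tr(φ(A)φ(B)) = tr(AB) for all A, B ∈ Mₙ(F). Then φ is linear (additive and homogeneous) and bijective. -/
open Matrix

lemma trace_mul_single_aux {F : Type*} [Field F] {n : ℕ}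
    (X : Matrix (Fin n) (Fin n) F) (i j : Fin n) :
    (X * Matrix.single j i (1 : F)).trace = X i j := by
  simp [Matrix.trace, Matrix.diag, Matrix.mul_apply, Matrix.single, ite_and,
    Finset.sum_ite_eq, Finset.sum_ite_eq']

lemma nondeg_aux {F : Type*} [Field F] {n : ℕ}
    (X : Matrix (Fin n) (Fin n) F) (hX : ∀ Y, (X * Y).trace = 0) : X = 0 := by
  ext i j
  have := hX (Matrix.single j i (1 : F))
  rw [trace_mul_single_aux] at this
  simpa using this

lemma single_pair_trace_aux {F : Type*} [Field F] {n : ℕ} (a b i j : Fin n) :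
    (Matrix.single a b (1:F) * Matrix.single j i (1:F)).trace
      = if (a, b) = (i, j) then 1 else 0 := by
  by_cases hbj : b = j
  · subst hbj
    rw [Matrix.single_mul_single_same]
    simp only [one_mul]
    by_cases hai : a = i
    · subst hai; simp
    · rw [Matrix.trace_single_eq_of_ne _ _ _ (by simpa using fun e => hai e)]
      simp [hai]
  · rw [Matrix.single_mul_single_of_ne (h := hbj)]
    simp [hbj]

theorem stmt_3 {F : Type*} [Field F] (n : ℕ)
    (φ : Matrix (Fin n) (Fin n) F → Matrix (Fin n) (Fin n) F)
    (h : ∀ A B : Matrix (Fin n) (Fin n) F, (φ A * φ B).trace = (A * B).trace) :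
    (∀ A B : Matrix (Fin n) (Fin n) F, φ (A + B) = φ A + φ B) ∧
    (∀ (c : F) (A : Matrix (Fin n) (Fin n) F), φ (c • A) = c • φ A) ∧
    Function.Bijective φ := by
  set v : Fin n × Fin n → Matrix (Fin n) (Fin n) F :=
    fun p => φ (Matrix.single p.1 p.2 (1 : F)) with hv
  have pair : ∀ p q : Fin n × Fin n,
      (v p * v q).trace = (Matrix.single p.1 p.2 (1:F) * Matrix.single q.1 q.2 (1:F)).trace :=
    fun p q => h _ _
  have lin_ind : LinearIndependent F v := by
    rw [Fintype.linearIndependent_iff]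
    intro g hg p
    obtain ⟨i, j⟩ := p
    have h0 : ((∑ q, g q • v q) * v (j, i)).trace = 0 := by rw [hg]; simp
    rw [Finset.sum_mul, Matrix.trace_sum] at h0
    have heach : ∀ q : Fin n × Fin n, ((g q • v q) * v (j, i)).trace
        = g q * (Matrix.single q.1 q.2 (1:F) * Matrix.single j i (1:F)).trace := by
      intro q
      rw [Matrix.smul_mul, Matrix.trace_smul, pair q (j, i)]
      simp
    simp only [heach] at h0
    have h1 : ∀ q : Fin n × Fin n,
        (Matrix.single q.1 q.2 (1:F) * Matrix.single j i (1:F)).trace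
          = if q = (i, j) then 1 else 0 := fun q => single_pair_trace_aux q.1 q.2 i j
    simp only [h1, mul_ite, mul_one, mul_zero, Finset.sum_ite_eq',
      Finset.mem_univ, if_true] at h0
    exact h0
  have span_top : Submodule.span F (Set.range v) = ⊤ := by
    apply lin_ind.span_eq_top_of_card_eq_finrank'
    simp [Module.finrank_matrix]
  have key : ∀ X : Matrix (Fin n) (Fin n) F,
      (∀ C : Matrix (Fin n) (Fin n) F, (X * φ C).trace = 0) → X = 0 := by
    intro X hX
    apply nondeg_aux
    intro Y
    have hY : Y ∈ Submodule.span F (Set.range v) := by rw [span_top]; trivial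
    induction hY using Submodule.span_induction with
    | mem y hy => obtain ⟨p, rfl⟩ := hy; exact hX _
    | zero => simp
    | add a b _ _ ha hb => rw [Matrix.mul_add, Matrix.trace_add, ha, hb, add_zero]
    | smul c a _ ha => rw [Matrix.mul_smul, Matrix.trace_smul, ha, smul_zero]
  have hadd : ∀ A B : Matrix (Fin n) (Fin n) F, φ (A + B) = φ A + φ B := by
    intro A B
    have e : φ (A + B) - (φ A + φ B) = 0 := by
      apply key
      intro C
      rw [Matrix.sub_mul, Matrix.trace_sub, Matrix.add_mul, Matrix.trace_add,
        h, h, h, Matrix.add_mul, Matrix.trace_add, sub_self]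
    linear_combination (norm := abel) e
  have hsmul : ∀ (c : F) (A : Matrix (Fin n) (Fin n) F), φ (c • A) = c • φ A := by
    intro c A
    have e : φ (c • A) - c • φ A = 0 := by
      apply key
      intro C
      rw [Matrix.sub_mul, Matrix.trace_sub, Matrix.smul_mul, Matrix.trace_smul,
        h, h, Matrix.smul_mul, Matrix.trace_smul, sub_self]
    linear_combination (norm := abel) e
  have hinj : Function.Injective φ := by
    intro A B hAB
    have e : A - B = 0 := by
      apply nondeg_aux
      intro Y
      rw [Matrix.sub_mul, Matrix.trace_sub, ← h A Y, ← h B Y, hAB, sub_self]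
    linear_combination (norm := abel) e
  refine ⟨hadd, hsmul, hinj, ?_⟩
  let ψ : Matrix (Fin n) (Fin n) F →ₗ[F] Matrix (Fin n) (Fin n) F :=
    { toFun := φ, map_add' := hadd, map_smul' := hsmul }
  exact LinearMap.surjective_of_injective (f := ψ) hinj
end

section
/- Let F be an algebraically closed field of characteristic 0. Every 2-local automorphism of Mₙ(F) is an automorphism. -/
section Aux

variable {F : Type*} [Field F] [CharZero F] {n : ℕ}

private lemma trace_mul_stdBasisMatrix (M : Matrix (Fin n) (Fin n) F) (k l : Fin n) :
    (M * Matrix.single k l (1 : F)).trace = M l k := by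
  classical
  simp [Matrix.trace, Matrix.diag, Matrix.mul_apply, Matrix.single,
    Finset.sum_ite_eq, mul_ite, Matrix.of_apply, ite_and]

/-- Every algebra automorphism of the matrix algebra preserves the trace. -/
private lemma trace_algEquiv [NeZero n]
    (ψ : Matrix (Fin n) (Fin n) F ≃ₐ[F] Matrix (Fin n) (Fin n) F)
    (A : Matrix (Fin n) (Fin n) F) : (ψ A).trace = A.trace := by
  classical
  set i₀ : Fin n := ⟨0, Nat.pos_of_ne_zero (NeZero.ne n)⟩ with hi₀
  set c : F := (ψ (Matrix.single i₀ i₀ (1 : F))).trace with hc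
  -- off-diagonal matrix units have trace-zero image
  have hoff : ∀ i j : Fin n, i ≠ j → (ψ (Matrix.single i j (1 : F))).trace = 0 := by
    intro i j hij
    have h1 : Matrix.single i j (1 : F)
        = Matrix.single i i (1 : F) * Matrix.single i j (1 : F) := by
      rw [Matrix.single_mul_single_same, one_mul]
    rw [h1, map_mul, Matrix.trace_mul_comm, ← map_mul,
      Matrix.single_mul_single_of_ne _ _ _ _ (Ne.symm hij) _, map_zero, Matrix.trace_zero]
  -- diagonal matrix units all have the same image trace
  have hdiag : ∀ i : Fin n, (ψ (Matrix.single i i (1 : F))).trace = c := by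
    intro i
    have h1 : Matrix.single i i (1 : F)
        = Matrix.single i i₀ (1 : F) * Matrix.single i₀ i (1 : F) := by
      rw [Matrix.single_mul_single_same, one_mul]
    rw [h1, map_mul, Matrix.trace_mul_comm, ← map_mul,
      Matrix.single_mul_single_same, one_mul, hc]
  -- hence `trace (ψ A) = c * trace A` for every `A`
  have key : ∀ A : Matrix (Fin n) (Fin n) F, (ψ A).trace = c * A.trace := by
    intro A
    conv_lhs => rw [Matrix.matrix_eq_sum_single A]
    simp only [map_sum, Matrix.trace_sum]
    have hterm : ∀ i j : Fin n,
        (ψ (Matrix.single i j (A i j))).trace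
          = A i j * (ψ (Matrix.single i j (1 : F))).trace := by
      intro i j
      have : Matrix.single i j (A i j) = A i j • Matrix.single i j (1 : F) := by
        rw [Matrix.smul_single, smul_eq_mul, mul_one]
      rw [this, map_smul, Matrix.trace_smul, smul_eq_mul]
    calc ∑ i, (∑ j, (ψ (Matrix.single i j (A i j))).trace)
        = ∑ i, A i i * c := by
          refine Finset.sum_congr rfl fun i _ => ?_
          rw [Finset.sum_congr rfl fun j (_ : j ∈ Finset.univ) => hterm i j]
          rw [Finset.sum_eq_single i]
          · rw [hdiag]
          · intro j _ hj
            rw [hoff i j (Ne.symm hj), mul_zero]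
          · intro h; exact absurd (Finset.mem_univ i) h
      _ = c * A.trace := by
          rw [Matrix.trace]; rw [Finset.mul_sum]
          exact Finset.sum_congr rfl fun i _ => mul_comm _ _
  have h1 : (ψ (1 : Matrix (Fin n) (Fin n) F)).trace = (n : F) := by
    rw [map_one, Matrix.trace_one]; simp
  have hc1 : c = 1 := by
    have hthis := key 1
    rw [h1, Matrix.trace_one, Fintype.card_fin] at hthis
    have hn : (n : F) ≠ 0 := Nat.cast_ne_zero.mpr (NeZero.ne n)
    have h2 : c * (n : F) = 1 * (n : F) := by rw [one_mul, ← hthis]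
    exact mul_right_cancel₀ hn h2
  rw [key, hc1, one_mul]

end Aux

theorem stmt_8 {F : Type*} [Field F] [IsAlgClosed F] [CharZero F] (n : ℕ)
    (φ : Matrix (Fin n) (Fin n) F → Matrix (Fin n) (Fin n) F)
    (h2loc : ∀ A B : Matrix (Fin n) (Fin n) F,
      ∃ ψ : Matrix (Fin n) (Fin n) F ≃ₐ[F] Matrix (Fin n) (Fin n) F,
        φ A = ψ A ∧ φ B = ψ B) :
    ∃ ψ : Matrix (Fin n) (Fin n) F ≃ₐ[F] Matrix (Fin n) (Fin n) F,
      ∀ A, φ A = ψ A := by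
  classical
  rcases eq_or_ne n 0 with rfl | hn
  · obtain ⟨ψ, hψ, -⟩ := h2loc 0 0
    refine ⟨ψ, fun A => ?_⟩
    have hA : A = 0 := by ext i j; exact i.elim0
    rw [hA, hψ]
  haveI : NeZero n := ⟨hn⟩
  -- single-point locality
  have hsingle : ∀ A : (Matrix (Fin n) (Fin n) F), ∃ ψ : (Matrix (Fin n) (Fin n) F) ≃ₐ[F] (Matrix (Fin n) (Fin n) F), φ A = ψ A := fun A =>
    (h2loc A A).imp fun ψ h => h.1
  -- the trace-form pairing is preserved
  have hpair : ∀ A B : (Matrix (Fin n) (Fin n) F), (φ A * φ B).trace = (A * B).trace := by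
    intro A B
    obtain ⟨ψ, hA, hB⟩ := h2loc A B
    rw [hA, hB, ← map_mul, trace_algEquiv]
  -- abbreviation for matrix units
  set E : Fin n × Fin n → (Matrix (Fin n) (Fin n) F) := fun p => Matrix.single p.1 p.2 (1 : F) with hE
  -- the images of the matrix units span everything
  have hspan : Submodule.span F (Set.range fun p => φ (E p)) = ⊤ := by
    apply LinearIndependent.span_eq_top_of_card_eq_finrank
    · rw [Fintype.linearIndependent_iff]
      intro g hg q
      have h0 : ((∑ p, g p • φ (E p)) * φ (E (q.2, q.1))).trace = 0 := by
        rw [hg, Matrix.zero_mul, Matrix.trace_zero]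
      rw [Finset.sum_mul] at h0
      have hterm : ∀ p : Fin n × Fin n,
          ((g p • φ (E p)) * φ (E (q.2, q.1))).trace
            = g p * (E p * E (q.2, q.1)).trace := by
        intro p
        rw [Matrix.smul_mul, Matrix.trace_smul, smul_eq_mul, hpair]
      rw [Matrix.trace_sum, Finset.sum_congr rfl fun p (_ : p ∈ Finset.univ) => hterm p] at h0
      have hEtr : ∀ p : Fin n × Fin n,
          (E p * E (q.2, q.1)).trace = if p = q then 1 else 0 := by
        intro p
        rw [hE]
        rw [trace_mul_stdBasisMatrix]
        by_cases h : p = q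
        · subst h; simp
        · rw [if_neg h]
          have hne : ¬(p.1 = q.1 ∧ p.2 = q.2) := by
            intro ⟨h1, h2⟩; exact h (Prod.ext h1 h2)
          exact Matrix.single_apply_of_ne _ _ _ _ _ hne
      rw [Finset.sum_congr rfl fun p (_ : p ∈ Finset.univ) => by rw [hEtr p]] at h0
      simpa using h0
    · simp [Module.finrank_matrix, Module.finrank_self]
  -- nondegeneracy of the pairing against the range of φ
  have hker : ∀ D : (Matrix (Fin n) (Fin n) F), (∀ C : (Matrix (Fin n) (Fin n) F), (D * φ C).trace = 0) → D = 0 := by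
    intro D hD
    have hall : ∀ X : (Matrix (Fin n) (Fin n) F), (D * X).trace = 0 := by
      intro X
      have hX : X ∈ Submodule.span F (Set.range fun p => φ (E p)) := by
        rw [hspan]; exact Submodule.mem_top
      induction hX using Submodule.span_induction with
      | mem x hx => obtain ⟨p, rfl⟩ := hx; exact hD (E p)
      | zero => rw [Matrix.mul_zero, Matrix.trace_zero]
      | add x y _ _ hx hy => rw [Matrix.mul_add, Matrix.trace_add, hx, hy, add_zero]
      | smul a x _ hx => rw [Matrix.mul_smul, Matrix.trace_smul, hx, smul_zero]
    ext i j
    have := hall (Matrix.single j i (1 : F))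
    rw [trace_mul_stdBasisMatrix] at this
    simpa using this
  -- additivity
  have hadd : ∀ A B : (Matrix (Fin n) (Fin n) F), φ (A + B) = φ A + φ B := by
    intro A B
    have h0 : ∀ C : (Matrix (Fin n) (Fin n) F), ((φ (A + B) - φ A - φ B) * φ C).trace = 0 := by
      intro C
      rw [Matrix.sub_mul, Matrix.sub_mul, Matrix.trace_sub, Matrix.trace_sub,
        hpair, hpair, hpair, Matrix.add_mul, Matrix.trace_add]
      ring
    have := hker _ h0
    have h1 : φ (A + B) - φ A - φ B + (φ A + φ B) = 0 + (φ A + φ B) := by rw [this]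
    simpa [sub_add_cancel] using h1
  -- homogeneity
  have hsmul : ∀ (c : F) (A : (Matrix (Fin n) (Fin n) F)), φ (c • A) = c • φ A := by
    intro c A
    have h0 : ∀ C : (Matrix (Fin n) (Fin n) F), ((φ (c • A) - c • φ A) * φ C).trace = 0 := by
      intro C
      rw [Matrix.sub_mul, Matrix.trace_sub, hpair, Matrix.smul_mul, Matrix.trace_smul,
        Matrix.smul_mul, Matrix.trace_smul, hpair]
      ring
    have := hker _ h0
    have h1 : φ (c • A) - c • φ A + c • φ A = 0 + c • φ A := by rw [this]
    simpa using h1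
  -- bundle as a linear map
  set L : (Matrix (Fin n) (Fin n) F) →ₗ[F] (Matrix (Fin n) (Fin n) F) :=
    { toFun := φ
      map_add' := hadd
      map_smul' := hsmul } with hL
  have hLapp : ∀ A : (Matrix (Fin n) (Fin n) F), L A = φ A := fun A => rfl
  -- basic multiplicative consequences of 2-locality
  have hzero : ∀ A B : (Matrix (Fin n) (Fin n) F), A * B = 0 → φ A * φ B = 0 := by
    intro A B h
    obtain ⟨ψ, hA, hB⟩ := h2loc A B
    rw [hA, hB, ← map_mul, h, map_zero]
  have hAB : ∀ A B : (Matrix (Fin n) (Fin n) F), A * B = B → φ A * φ B = φ B := by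
    intro A B h
    obtain ⟨ψ, hA, hB⟩ := h2loc A B
    rw [hA, hB, ← map_mul, h]
  have hBA : ∀ A B : (Matrix (Fin n) (Fin n) F), A * B = A → φ A * φ B = φ A := by
    intro A B h
    obtain ⟨ψ, hA, hB⟩ := h2loc A B
    rw [hA, hB, ← map_mul, h]
  have hsq : ∀ A : (Matrix (Fin n) (Fin n) F), φ (A * A) = φ A * φ A := by
    intro A
    obtain ⟨ψ, hA, hA2⟩ := h2loc A (A * A)
    rw [hA2, map_mul, ← hA]
  have h0φ : φ 0 = 0 := by
    obtain ⟨ψ, h⟩ := hsingle 0; rw [h, map_zero]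
  have h1φ : φ 1 = 1 := by
    obtain ⟨ψ, h⟩ := hsingle 1; rw [h, map_one]
  -- multiplicativity on matrix units
  have hEmul : ∀ i j k l : Fin n,
      φ (Matrix.single i j (1 : F) * Matrix.single k l (1 : F))
        = φ (Matrix.single i j (1 : F)) * φ (Matrix.single k l (1 : F)) := by
    intro i j k l
    by_cases hjk : j = k
    · subst hjk
      rw [Matrix.single_mul_single_same, one_mul]
      by_cases hij : i = j
      · subst hij
        exact (hAB _ _ (by rw [Matrix.single_mul_single_same, one_mul])).symm
      · by_cases hjl : j = l
        · subst hjl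
          exact (hBA _ _ (by rw [Matrix.single_mul_single_same, one_mul])).symm
        · by_cases hil : i = l
          · -- the case  E i j * E j i = E i i  with i ≠ j
            subst hil
            set u : (Matrix (Fin n) (Fin n) F) := φ (Matrix.single i j (1 : F)) with hu
            set v : (Matrix (Fin n) (Fin n) F) := φ (Matrix.single j i (1 : F)) with hv
            set Pa : (Matrix (Fin n) (Fin n) F) := φ (Matrix.single i i (1 : F)) with hPa
            set Pb : (Matrix (Fin n) (Fin n) F) := φ (Matrix.single j j (1 : F)) with hPb
            -- basic relations
            have hPau : Pa * u = u :=
              hAB _ _ (by rw [Matrix.single_mul_single_same, one_mul])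
            have hvPa : v * Pa = v :=
              hBA _ _ (by rw [Matrix.single_mul_single_same, one_mul])
            have hPav : Pa * v = 0 :=
              hzero _ _ (Matrix.single_mul_single_of_ne _ _ _ _ hij 1)
            have hPaPb : Pa * Pb = 0 :=
              hzero _ _ (Matrix.single_mul_single_of_ne _ _ _ _ hij 1)
            have hPaPa : Pa * Pa = Pa :=
              hAB _ _ (by rw [Matrix.single_mul_single_same, one_mul])
            have huu : u * u = 0 :=
              hzero _ _ (Matrix.single_mul_single_of_ne _ _ _ _ (Ne.symm hij) 1)
            have hvv : v * v = 0 :=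
              hzero _ _ (Matrix.single_mul_single_of_ne _ _ _ _ hij 1)
            -- Jordan relation : u*v + v*u = Pa + Pb
            have hS : (Matrix.single i j (1 : F) + Matrix.single j i (1 : F)) *
                (Matrix.single i j (1 : F) + Matrix.single j i (1 : F))
                  = Matrix.single i i (1 : F) + Matrix.single j j (1 : F) := by
              rw [Matrix.add_mul, Matrix.mul_add, Matrix.mul_add,
                Matrix.single_mul_single_of_ne _ _ _ _ (Ne.symm hij) _,
                Matrix.single_mul_single_same, Matrix.single_mul_single_same,
                Matrix.single_mul_single_of_ne _ _ _ _ hij _, one_mul]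
              abel
            have hf1 : u * v + v * u = Pa + Pb := by
              have h1 : φ (Matrix.single i i (1 : F) + Matrix.single j j (1 : F))
                  = (u + v) * (u + v) := by
                rw [← hS, hsq, hadd]
              rw [hadd] at h1
              rw [Matrix.add_mul, Matrix.mul_add, Matrix.mul_add, huu, hvv] at h1
              rw [← hPa, ← hPb] at h1
              rw [h1]
              abel
            -- multiply hf1 on both sides by Pa
            have key : Pa * (u * v + v * u) * Pa = Pa * (Pa + Pb) * Pa := by rw [hf1]
            have hL1 : Pa * (u * v + v * u) * Pa = u * v := by
              rw [Matrix.mul_add, Matrix.add_mul, ← Matrix.mul_assoc Pa u v, hPau,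
                ← Matrix.mul_assoc Pa v u, hPav, Matrix.zero_mul, Matrix.zero_mul, add_zero,
                Matrix.mul_assoc u v Pa, hvPa]
            have hR1 : Pa * (Pa + Pb) * Pa = Pa := by
              rw [Matrix.mul_add, Matrix.add_mul, hPaPa, hPaPb, Matrix.zero_mul, add_zero, hPaPa]
            rw [hPa]
            rw [← hL1, key, hR1]
          · -- distinct i, j, l
            have hS : (Matrix.single i j (1 : F) + Matrix.single j l (1 : F)) *
                (Matrix.single i j (1 : F) + Matrix.single j l (1 : F))
                  = Matrix.single i l (1 : F) := by
              rw [Matrix.add_mul, Matrix.mul_add, Matrix.mul_add,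
                Matrix.single_mul_single_of_ne _ _ _ _ (Ne.symm hij) _,
                Matrix.single_mul_single_same,
                Matrix.single_mul_single_of_ne _ _ _ _ (fun h => hil h.symm) _,
                Matrix.single_mul_single_of_ne _ _ _ _ (Ne.symm hjl) _, one_mul]
              abel
            have h1 : φ (Matrix.single i l (1 : F))
                = (φ (Matrix.single i j (1 : F)) + φ (Matrix.single j l (1 : F))) *
                  (φ (Matrix.single i j (1 : F)) + φ (Matrix.single j l (1 : F))) := by
              rw [← hS, hsq, hadd]
            rw [Matrix.add_mul, Matrix.mul_add, Matrix.mul_add,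
              hzero _ _ (Matrix.single_mul_single_of_ne _ _ _ _ (Ne.symm hij) 1),
              hzero _ _ (Matrix.single_mul_single_of_ne _ _ _ _ (fun h => hil h.symm) 1),
              hzero _ _ (Matrix.single_mul_single_of_ne _ _ _ _ (Ne.symm hjl) 1)] at h1
            rw [h1]
            abel
    · rw [Matrix.single_mul_single_of_ne _ _ _ _ hjk _, h0φ,
        hzero _ _ (Matrix.single_mul_single_of_ne _ _ _ _ hjk 1)]
  -- full multiplicativity via bilinearity
  have hmul : ∀ A B : (Matrix (Fin n) (Fin n) F), φ (A * B) = φ A * φ B := by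
    have hbil : (LinearMap.mul F (Matrix (Fin n) (Fin n) F)).compr₂ L = ((LinearMap.mul F (Matrix (Fin n) (Fin n) F)).compl₁₂ L L) := by
      apply LinearMap.ext_basis (Matrix.stdBasis F (Fin n) (Fin n))
        (Matrix.stdBasis F (Fin n) (Fin n))
      intro p q
      obtain ⟨p1, p2⟩ := p
      obtain ⟨q1, q2⟩ := q
      simp only [LinearMap.compr₂_apply, LinearMap.compl₁₂_apply, LinearMap.mul_apply',
        Matrix.stdBasis_eq_single, hLapp]
      exact hEmul p1 p2 q1 q2
    intro A B
    have h := LinearMap.congr_fun (LinearMap.congr_fun hbil A) B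
    simpa only [LinearMap.compr₂_apply, LinearMap.compl₁₂_apply, LinearMap.mul_apply',
      hLapp] using h
  -- φ is injective
  have hinj : Function.Injective L := by
    rw [← LinearMap.ker_eq_bot, LinearMap.ker_eq_bot']
    intro A hA
    obtain ⟨ψ, h⟩ := hsingle A
    rw [hLapp, h] at hA
    have := ψ.injective (hA.trans (map_zero ψ).symm)
    exact this
  have hsurj : Function.Surjective L := LinearMap.injective_iff_surjective.mp hinj
  -- build the algebra equivalence
  let Φ : (Matrix (Fin n) (Fin n) F) →ₐ[F] (Matrix (Fin n) (Fin n) F) := AlgHom.ofLinearMap L h1φ hmul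
  refine ⟨AlgEquiv.ofBijective Φ ⟨hinj, hsurj⟩, fun A => rfl⟩
end

section
/- Let φ be a 2-local automorphism of Mₙ(F). If φ(A) = T Aᵗ T⁻¹ for all A with some fixed invertible T, then n = 1. Equivalently, for n ≥ 2 the transpose-type form is impossible: there exist A, B with AB = 0 and BA ≠ 0, so eigv(φ(A)φ(B)) = eigv(AB) fails for the anti-homomorphic form. -/
theorem stmt_10 {F : Type*} [Field F] (n : ℕ) (hn : 0 < n)
    (φ : Matrix (Fin n) (Fin n) F → Matrix (Fin n) (Fin n) F)
    (h2loc : ∀ A B : Matrix (Fin n) (Fin n) F,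
      ∃ ψ : Matrix (Fin n) (Fin n) F ≃ₐ[F] Matrix (Fin n) (Fin n) F,
        φ A = ψ A ∧ φ B = ψ B)
    (T : Matrix (Fin n) (Fin n) F) (hT : IsUnit T)
    (hform : ∀ A : Matrix (Fin n) (Fin n) F, φ A = T * A.transpose * T⁻¹) :
    n = 1 := by
  by_contra hne
  have h2 : 2 ≤ n := by omega
  set i0 : Fin n := ⟨0, by omega⟩
  set i1 : Fin n := ⟨1, by omega⟩
  have hi : i0 ≠ i1 := by
    intro h
    have := congrArg Fin.val h
    simp [i0, i1] at this
  set A : Matrix (Fin n) (Fin n) F := Matrix.single i1 i1 1 with hA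
  set B : Matrix (Fin n) (Fin n) F := Matrix.single i0 i1 1 with hB
  have hAB : A * B = 0 := Matrix.single_mul_single_of_ne 1 i1 i1 i0 hi.symm 1
  have hBA : B * A = Matrix.single i0 i1 1 := by
    rw [hB, hA]; simp
  obtain ⟨ψ, hψA, hψB⟩ := h2loc A B
  have hdet : IsUnit T.det := (Matrix.isUnit_iff_isUnit_det T).mp hT
  have hinv : T⁻¹ * T = 1 := Matrix.nonsing_inv_mul T hdet
  have h0 : φ A * φ B = 0 := by
    rw [hψA, hψB, ← map_mul, hAB, map_zero]
  rw [hform A, hform B] at h0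
  have h0' : T * (B * A).transpose * T⁻¹ = 0 := by
    rw [Matrix.transpose_mul, ← h0]
    simp only [Matrix.mul_assoc, Matrix.nonsing_inv_mul_cancel_left T _ hdet]
  have hBA0 : (B * A).transpose = 0 := by
    have := congrArg (fun M => T⁻¹ * M * T) h0'
    simpa [← Matrix.mul_assoc, hinv, Matrix.mul_assoc, Matrix.mul_nonsing_inv T hdet,
      Matrix.nonsing_inv_mul_cancel_left T _ hdet] using this
  have : (1 : F) = 0 := by
    have := congrFun (congrFun hBA0 i1) i0
    simpa [hBA, Matrix.single] using this
  exact one_ne_zero this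
end

section
/- Let X be a Banach space, ψ : F(X) → B(X) a nonzero algebra homomorphism on the finite rank operators, and define T : X → X by Tx = ψ(x ⊗ f₀) y₀, where y₀ ∈ X and f₀ ∈ X' are chosen so that ψ(x ⊗ f₀) y₀ ≠ 0 for some x. Then T is an injective linear operator satisfying T A = ψ(A) T for all A ∈ F(X). -/
/-- `A` is a finite rank (bounded) operator. -/
def FiniteRankOp {𝕜 X : Type*} [RCLike 𝕜] [NormedAddCommGroup X] [NormedSpace 𝕜 X]
    (A : X →L[𝕜] X) : Prop :=
  FiniteDimensional 𝕜 (LinearMap.range (A : X →ₗ[𝕜] X))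

lemma finiteRank_smulRight {𝕜 X : Type*} [RCLike 𝕜] [NormedAddCommGroup X] [NormedSpace 𝕜 X]
    (f : X →L[𝕜] 𝕜) (x : X) : FiniteRankOp (f.smulRight x) := by
  unfold FiniteRankOp
  have h : LinearMap.range ((f.smulRight x : X →L[𝕜] X) : X →ₗ[𝕜] X) ≤ Submodule.span 𝕜 {x} := by
    rintro y ⟨z, rfl⟩
    simp only [ContinuousLinearMap.coe_coe, ContinuousLinearMap.smulRight_apply]
    exact Submodule.smul_mem _ _ (Submodule.mem_span_singleton_self x)
  exact Submodule.finiteDimensional_of_le h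

theorem stmt_12 {𝕜 X : Type*} [RCLike 𝕜] [NormedAddCommGroup X] [NormedSpace 𝕜 X]
    [CompleteSpace X]
    (ψ : (X →L[𝕜] X) → (X →L[𝕜] X))
    (hadd : ∀ A B : X →L[𝕜] X, FiniteRankOp A → FiniteRankOp B → ψ (A + B) = ψ A + ψ B)
    (hsmul : ∀ (c : 𝕜) (A : X →L[𝕜] X), FiniteRankOp A → ψ (c • A) = c • ψ A)
    (hmul : ∀ A B : X →L[𝕜] X, FiniteRankOp A → FiniteRankOp B →
      ψ (A ∘L B) = ψ A ∘L ψ B)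
    (y₀ : X) (f₀ : X →L[𝕜] 𝕜)
    (hnz : ∃ x : X, ψ (f₀.smulRight x) y₀ ≠ 0) :
    ∃ T : X →ₗ[𝕜] X,
      (∀ x : X, T x = ψ (f₀.smulRight x) y₀) ∧
      Function.Injective T ∧
      (∀ A : X →L[𝕜] X, FiniteRankOp A → ∀ x : X, T (A x) = ψ A (T x)) := by
  refine ⟨{ toFun := fun x => ψ (f₀.smulRight x) y₀
            map_add' := ?_
            map_smul' := ?_ }, fun x => rfl, ?_, ?_⟩
  · intro x y
    show ψ (f₀.smulRight (x + y)) y₀ = ψ (f₀.smulRight x) y₀ + ψ (f₀.smulRight y) y₀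
    have h : f₀.smulRight (x + y) = f₀.smulRight x + f₀.smulRight y := by
      ext z; simp [smul_add]
    rw [h, hadd _ _ (finiteRank_smulRight f₀ x) (finiteRank_smulRight f₀ y)]
    simp
  · intro c x
    show ψ (f₀.smulRight (c • x)) y₀ = c • ψ (f₀.smulRight x) y₀
    have h : f₀.smulRight (c • x) = c • f₀.smulRight x := by
      ext z
      simp only [ContinuousLinearMap.smulRight_apply, ContinuousLinearMap.smul_apply]
      rw [smul_comm]
    rw [h, hsmul c _ (finiteRank_smulRight f₀ x)]
    simp
  · -- injectivity
    rw [injective_iff_map_eq_zero]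
    intro x hx
    simp only [LinearMap.coe_mk, AddHom.coe_mk] at hx
    by_contra hx0
    obtain ⟨g, hg⟩ := SeparatingDual.exists_eq_one (R := 𝕜) hx0
    obtain ⟨z, hz⟩ := hnz
    apply hz
    have h : f₀.smulRight z = (g.smulRight z) ∘L (f₀.smulRight x) := by
      ext w
      simp [hg, smul_smul, mul_comm]
    rw [h, hmul _ _ (finiteRank_smulRight g z) (finiteRank_smulRight f₀ x)]
    simp [hx]
  · intro A hA x
    have h : f₀.smulRight (A x) = A ∘L (f₀.smulRight x) := by
      ext w; simp
    simp only [LinearMap.coe_mk, AddHom.coe_mk]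
    rw [h, hmul _ _ hA (finiteRank_smulRight f₀ x)]
    simp
end

section
/- Let X be a Banach space and (Pₙ) a sequence of pairwise orthogonal rank-one idempotents in B(X) with sup ‖Pₙ‖ < ∞. Let λₙ = (1/3)ⁿ. If U ∈ B(X) is invertible withU (∑ₙ λₙ Pₙ) U⁻¹ = ∑ₙ λₙ Pₙ, then U Pₙ U⁻¹ = Pₙ for every n. -/
theorem stmt_13 {𝕜 X : Type*} [RCLike 𝕜] [NormedAddCommGroup X] [NormedSpace 𝕜 X]
    [CompleteSpace X]
    (P : ℕ → (X →L[𝕜] X))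
    (hidem : ∀ n, P n * P n = P n)
    (horth : ∀ m n, m ≠ n → P m * P n = 0)
    (hrank : ∀ n, Module.finrank 𝕜 (LinearMap.range ((P n : X →L[𝕜] X) : X →ₗ[𝕜] X)) = 1)
    (hbdd : ∃ C : ℝ, ∀ n, ‖P n‖ ≤ C)
    (U V : X →L[𝕜] X) (hUV : U * V = 1) (hVU : V * U = 1)
    (hfix : U * (∑' n : ℕ, ((1/3 : 𝕜) ^ n) • P n) * V = ∑' n : ℕ, ((1/3 : 𝕜) ^ n) • P n) :
    ∀ n, U * P n * V = P n := by
  obtain ⟨C, hC⟩ := hbdd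
  set c : 𝕜 := (1/3 : 𝕜) with hc
  have hcnorm : ‖c‖ = 1/3 := by
    rw [hc, norm_div, norm_one]
    norm_num [RCLike.norm_ofNat]
  have hc0 : c ≠ 0 := by
    intro h
    rw [h, norm_zero] at hcnorm
    norm_num at hcnorm
  have cinj : ∀ m k : ℕ, m ≠ k → c ^ m ≠ c ^ k := by
    intro m k hmk h
    apply hmk
    have h2 := congrArg norm h
    rw [norm_pow, norm_pow, hcnorm] at h2
    exact (pow_right_strictAnti₀ (by norm_num) (by norm_num : (1:ℝ)/3 < 1)).injective h2
  -- summability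
  have hsum : Summable (fun m : ℕ => c ^ m • P m) := by
    have hsg : Summable (fun m : ℕ => (1/3 : ℝ) ^ m * C) :=
      (summable_geometric_of_lt_one (by norm_num) (by norm_num)).mul_right C
    apply Summable.of_norm_bounded hsg
    intro m
    calc ‖c ^ m • P m‖ ≤ ‖c ^ m‖ * ‖P m‖ := ContinuousLinearMap.opNorm_smul_le _ _
      _ ≤ (1/3) ^ m * C := by
          rw [norm_pow, hcnorm]
          exact mul_le_mul_of_nonneg_left (hC m) (by positivity)
  set T : X →L[𝕜] X := ∑' m : ℕ, c ^ m • P m with hT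
  set Q : ℕ → (X →L[𝕜] X) := fun m => U * P m * V with hQ
  -- Q m * Q k = U * (P m * P k) * V
  have hQmul : ∀ a b, Q a * Q b = U * (P a * P b) * V := by
    intro a b
    have : (U * P a * V) * (U * P b * V) = U * (P a * P b) * V := by
      have h1 : (U * P a * V) * (U * P b * V) = U * P a * (V * U) * P b * V := by
        noncomm_ring
      rw [h1, hVU, mul_one, mul_assoc U (P a) (P b)]
    simpa [hQ] using this
  -- representation of T via Q
  have hsumV : Summable (fun m : ℕ => (c ^ m • P m) * V) := hsum.mul_right V
  have hterm : ∀ m : ℕ, U * ((c ^ m • P m) * V) = c ^ m • Q m := by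
    intro m
    simp only [hQ, smul_mul_assoc, mul_smul_comm, mul_assoc]
  have hQsum : Summable (fun m : ℕ => c ^ m • Q m) :=
    (hsumV.mul_left U).congr hterm
  have hQrep : (∑' m : ℕ, c ^ m • Q m) = T := by
    calc (∑' m : ℕ, c ^ m • Q m) = ∑' m : ℕ, U * ((c ^ m • P m) * V) :=
          tsum_congr fun m => (hterm m).symm
      _ = U * ∑' m : ℕ, (c ^ m • P m) * V := hsumV.tsum_mul_left U
      _ = U * (T * V) := by rw [hsum.tsum_mul_right V]
      _ = T := by rw [← mul_assoc]; exact hfix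
  -- P k * T = c^k • P k
  have hPT : ∀ k, P k * T = c ^ k • P k := by
    intro k
    rw [hT, (hsum.tsum_mul_left (P k)).symm]
    have : ∀ m : ℕ, P k * (c ^ m • P m) = c ^ m • (P k * P m) := fun m => mul_smul_comm _ _ _
    rw [tsum_congr this, tsum_eq_single k]
    · rw [hidem]
    · intro b hb
      rw [horth k b (Ne.symm hb), smul_zero]
  -- T * Q k = c^k • Q k
  have hTQ : ∀ k, T * Q k = c ^ k • Q k := by
    intro k
    rw [← hQrep, (hQsum.tsum_mul_right (Q k)).symm]
    have : ∀ m : ℕ, (c ^ m • Q m) * Q k = c ^ m • (Q m * Q k) := fun m => smul_mul_assoc _ _ _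
    rw [tsum_congr this, tsum_eq_single k]
    · rw [hQmul, hidem]
    · intro b hb
      rw [hQmul, horth b k hb, mul_zero, zero_mul, smul_zero]
  -- orthogonality across the two families
  have hPQ : ∀ m k, m ≠ k → P m * Q k = 0 := by
    intro m k hmk
    have key : c ^ m • (P m * Q k) = c ^ k • (P m * Q k) := by
      calc c ^ m • (P m * Q k) = (c ^ m • P m) * Q k := (smul_mul_assoc _ _ _).symm
        _ = (P m * T) * Q k := by rw [hPT m]
        _ = P m * (T * Q k) := mul_assoc _ _ _
        _ = P m * (c ^ k • Q k) := by rw [hTQ k]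
        _ = c ^ k • (P m * Q k) := mul_smul_comm _ _ _
    have h0 : (c ^ m - c ^ k) • (P m * Q k) = 0 := by
      rw [sub_smul, key, sub_self]
    rcases smul_eq_zero.mp h0 with h | h
    · exact absurd (sub_eq_zero.mp h) (cinj m k hmk)
    · exact h
  -- P k * T computed via Q representation
  have hPTQ : ∀ k, P k * T = c ^ k • (P k * Q k) := by
    intro k
    rw [← hQrep, (hQsum.tsum_mul_left (P k)).symm]
    have : ∀ m : ℕ, P k * (c ^ m • Q m) = c ^ m • (P k * Q m) := fun m => mul_smul_comm _ _ _
    rw [tsum_congr this, tsum_eq_single k]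
    intro b hb
    rw [hPQ k b (Ne.symm hb), smul_zero]
  -- T * Q k computed via P representation
  have hTQP : ∀ k, T * Q k = c ^ k • (P k * Q k) := by
    intro k
    rw [hT, (hsum.tsum_mul_right (Q k)).symm]
    have : ∀ m : ℕ, (c ^ m • P m) * Q k = c ^ m • (P m * Q k) := fun m => smul_mul_assoc _ _ _
    rw [tsum_congr this, tsum_eq_single k]
    intro b hb
    rw [hPQ b k hb, smul_zero]
  intro n
  have e1 : c ^ n • P n = c ^ n • (P n * Q n) := (hPT n).symm.trans (hPTQ n)
  have e2 : c ^ n • Q n = c ^ n • (P n * Q n) := (hTQ n).symm.trans (hTQP n)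
  have : P n = Q n :=
    smul_right_injective _ (pow_ne_zero n hc0) (e1.trans e2.symm)
  simpa [hQ] using this.symm
end

section
/- Let Q₁, Q₂, … and P₁, P₂, … be two sequences of pairwise orthogonal bounded idempotents on a Banach space X, uniformly bounded in norm, and let λₙ = (1/3)ⁿ. If ∑ₙ λₙ Qₙ = ∑ₙ λₙ Pₙ (norm convergent series), then Qₙ = Pₙ for all n. -/
open scoped Topology
open Filter

section aux

variable {𝕜 X : Type*} [RCLike 𝕜] [NormedAddCommGroup X] [NormedSpace 𝕜 X] [CompleteSpace X]

omit [CompleteSpace X] in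
lemma aux_norm_coef (Q : X →L[𝕜] X) (m : ℕ) : ‖(1/3 : 𝕜) ^ m • Q‖ = (1/3 : ℝ) ^ m * ‖Q‖ := by
  have := norm_smul ((1/3 : 𝕜) ^ m) Q
  rw [norm_pow] at this
  simpa using this

lemma aux_summable (Q : ℕ → (X →L[𝕜] X)) {C : ℝ} (hC : ∀ n, ‖Q n‖ ≤ C)
    (e : ℕ → ℕ) (he : ∀ n, n ≤ e n) :
    Summable (fun n => ((1/3 : 𝕜) ^ (e n)) • Q n) := by
  have hC0 : 0 ≤ C := (norm_nonneg _).trans (hC 0)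
  have hg : Summable (fun n : ℕ => (1/3 : ℝ) ^ n * C) :=
    (summable_geometric_of_lt_one (by norm_num) (by norm_num)).mul_right C
  refine Summable.of_norm (Summable.of_nonneg_of_le (fun n => norm_nonneg _) (fun n => ?_) hg)
  rw [aux_norm_coef]
  have h1 : (1/3 : ℝ) ^ (e n) ≤ (1/3 : ℝ) ^ n :=
    pow_le_pow_of_le_one (by norm_num) (by norm_num) (he n)
  exact mul_le_mul h1 (hC n) (norm_nonneg _) (by positivity)

lemma aux_mul_sum (Q : ℕ → (X →L[𝕜] X)) {C : ℝ} (hC : ∀ n, ‖Q n‖ ≤ C)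
    (hidem : ∀ n, Q n * Q n = Q n) (horth : ∀ m n, m ≠ n → Q m * Q n = 0) (n : ℕ) :
    Q n * (∑' m : ℕ, ((1/3 : 𝕜) ^ m) • Q m) = ((1/3 : 𝕜) ^ n) • Q n := by
  have hs : Summable (fun m => ((1/3 : 𝕜) ^ m) • Q m) := aux_summable Q hC id (fun _ => le_rfl)
  rw [← hs.tsum_mul_left]
  have h1 : ∀ m : ℕ, Q n * (((1/3 : 𝕜) ^ m) • Q m) = ((1/3 : 𝕜) ^ m) • (Q n * Q m) :=
    fun m => mul_smul_comm _ _ _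
  calc (∑' m : ℕ, Q n * ((1/3 : 𝕜) ^ m) • Q m)
      = ∑' m : ℕ, ((1/3 : 𝕜) ^ m) • (Q n * Q m) := tsum_congr h1
    _ = ((1/3 : 𝕜) ^ n) • (Q n * Q n) :=
        tsum_eq_single n (fun m hm => by rw [horth n m (Ne.symm hm), smul_zero])
    _ = ((1/3 : 𝕜) ^ n) • Q n := by rw [hidem n]

lemma aux_pow (Q : ℕ → (X →L[𝕜] X)) {C : ℝ} (hC : ∀ n, ‖Q n‖ ≤ C)
    (hidem : ∀ n, Q n * Q n = Q n) (horth : ∀ m n, m ≠ n → Q m * Q n = 0) (k : ℕ) :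
    (∑' m : ℕ, ((1/3 : 𝕜) ^ m) • Q m) ^ (k + 1)
      = ∑' n : ℕ, ((1/3 : 𝕜) ^ (n * (k + 1))) • Q n := by
  induction k with
  | zero => simp
  | succ k ih =>
    rw [pow_succ, ih,
      ← (aux_summable Q hC (fun n => n * (k+1)) (fun n => Nat.le_mul_of_pos_right n k.succ_pos)).tsum_mul_right]
    refine tsum_congr fun n => ?_
    calc (((1/3 : 𝕜) ^ (n * (k+1))) • Q n) * (∑' m : ℕ, ((1/3 : 𝕜) ^ m) • Q m)
        = ((1/3 : 𝕜) ^ (n * (k+1))) • (Q n * ∑' m : ℕ, ((1/3 : 𝕜) ^ m) • Q m) :=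
          smul_mul_assoc _ _ _
      _ = ((1/3 : 𝕜) ^ (n * (k+1))) • (((1/3 : 𝕜) ^ n) • Q n) := by
          rw [aux_mul_sum Q hC hidem horth n]
      _ = (((1/3 : 𝕜) ^ (n * (k+1)) * (1/3 : 𝕜) ^ n)) • Q n := smul_smul _ _ _
      _ = ((1/3 : 𝕜) ^ (n * (k + 1 + 1))) • Q n := by
          rw [← pow_add, show n * (k+1) + n = n * (k + 1 + 1) by ring]

lemma aux_tail_bound (Q : ℕ → (X →L[𝕜] X)) {C : ℝ} (hC : ∀ n, ‖Q n‖ ≤ C) (k : ℕ) :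
    ‖∑' n : ℕ, ((1/3 : 𝕜) ^ ((n + 1) * (k + 1))) • Q (n + 1)‖ ≤ (1/3 : ℝ) ^ (k+1) * (C * (3/2)) := by
  have hC0 : 0 ≤ C := (norm_nonneg _).trans (hC 0)
  have hterm : ∀ n : ℕ, ‖((1/3 : 𝕜) ^ ((n + 1) * (k + 1))) • Q (n + 1)‖
      ≤ (1/3 : ℝ) ^ (k + 1) * ((1/3 : ℝ) ^ n * C) := by
    intro n
    rw [aux_norm_coef]
    have h1 : (1/3 : ℝ) ^ ((n+1) * (k+1)) ≤ (1/3 : ℝ) ^ ((k+1) + n) :=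
      pow_le_pow_of_le_one (by norm_num) (by norm_num) (by nlinarith)
    calc (1/3 : ℝ) ^ ((n+1)*(k+1)) * ‖Q (n+1)‖
        ≤ (1/3 : ℝ) ^ ((k+1) + n) * C :=
          mul_le_mul h1 (hC (n+1)) (norm_nonneg _) (by positivity)
      _ = (1/3 : ℝ) ^ (k+1) * ((1/3 : ℝ) ^ n * C) := by rw [pow_add]; ring
  have hsum : Summable (fun n : ℕ => (1/3 : ℝ) ^ (k + 1) * ((1/3 : ℝ) ^ n * C)) :=
    (((summable_geometric_of_lt_one (by norm_num) (by norm_num)).mul_right C).mul_left _)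
  have hsn : Summable (fun n : ℕ => ‖((1/3 : 𝕜) ^ ((n + 1) * (k + 1))) • Q (n + 1)‖) :=
    Summable.of_nonneg_of_le (fun _ => norm_nonneg _) hterm hsum
  calc ‖∑' n : ℕ, ((1/3 : 𝕜) ^ ((n + 1) * (k + 1))) • Q (n + 1)‖
      ≤ ∑' n : ℕ, ‖((1/3 : 𝕜) ^ ((n + 1) * (k + 1))) • Q (n + 1)‖ := norm_tsum_le_tsum_norm hsn
    _ ≤ ∑' n : ℕ, (1/3 : ℝ) ^ (k + 1) * ((1/3 : ℝ) ^ n * C) := Summable.tsum_le_tsum hterm hsn hsum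
    _ = (1/3 : ℝ) ^ (k+1) * (C * (3/2)) := by
        rw [tsum_mul_left, tsum_mul_right, tsum_geometric_of_lt_one (by norm_num) (by norm_num)]
        norm_num
        ring

lemma aux_head (P Q : ℕ → (X →L[𝕜] X))
    (hPidem : ∀ n, P n * P n = P n) (hQidem : ∀ n, Q n * Q n = Q n)
    (hPorth : ∀ m n, m ≠ n → P m * P n = 0)
    (hQorth : ∀ m n, m ≠ n → Q m * Q n = 0)
    {C : ℝ} (hP : ∀ n, ‖P n‖ ≤ C) (hQ : ∀ n, ‖Q n‖ ≤ C)
    (heq : (∑' n : ℕ, ((1/3 : 𝕜) ^ n) • Q n) = ∑' n : ℕ, ((1/3 : 𝕜) ^ n) • P n) :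
    Q 0 = P 0 := by
  have key : ∀ k : ℕ, ‖Q 0 - P 0‖ ≤ (1/3 : ℝ) ^ (k+1) * (C * 3) := by
    intro k
    have hQpow := aux_pow Q hQ hQidem hQorth k
    have hPpow := aux_pow P hP hPidem hPorth k
    rw [heq] at hQpow
    have hsplit : ∀ (R : ℕ → (X →L[𝕜] X)), (∀ n, ‖R n‖ ≤ C) →
        (∑' n : ℕ, ((1/3 : 𝕜) ^ (n * (k + 1))) • R n)
          = R 0 + ∑' n : ℕ, ((1/3 : 𝕜) ^ ((n + 1) * (k + 1))) • R (n + 1) := by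
      intro R hR
      rw [Summable.tsum_eq_zero_add (aux_summable R hR (fun n => n * (k+1))
        (fun n => Nat.le_mul_of_pos_right n k.succ_pos))]
      simp
    have hkey : Q 0 + (∑' n : ℕ, ((1/3 : 𝕜) ^ ((n + 1) * (k + 1))) • Q (n + 1))
        = P 0 + ∑' n : ℕ, ((1/3 : 𝕜) ^ ((n + 1) * (k + 1))) • P (n + 1) := by
      have h := hQpow.symm.trans hPpow
      rwa [hsplit Q hQ, hsplit P hP] at h
    have hdiff : Q 0 - P 0 = (∑' n : ℕ, ((1/3 : 𝕜) ^ ((n + 1) * (k + 1))) • P (n + 1))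
        - ∑' n : ℕ, ((1/3 : 𝕜) ^ ((n + 1) * (k + 1))) • Q (n + 1) := by
      rw [sub_eq_sub_iff_add_eq_add, hkey, add_comm]
    rw [hdiff]
    calc ‖_ - _‖ ≤ ‖(∑' n : ℕ, ((1/3 : 𝕜) ^ ((n + 1) * (k + 1))) • P (n + 1))‖
          + ‖∑' n : ℕ, ((1/3 : 𝕜) ^ ((n + 1) * (k + 1))) • Q (n + 1)‖ := norm_sub_le _ _
      _ ≤ (1/3 : ℝ) ^ (k+1) * (C * (3/2)) + (1/3 : ℝ) ^ (k+1) * (C * (3/2)) :=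
          add_le_add (aux_tail_bound P hP k) (aux_tail_bound Q hQ k)
      _ = (1/3 : ℝ) ^ (k+1) * (C * 3) := by ring
  have htend : Tendsto (fun k : ℕ => (1/3 : ℝ) ^ (k+1) * (C * 3)) atTop (𝓝 0) := by
    have h1 := (tendsto_pow_atTop_nhds_zero_of_lt_one (r := (1/3 : ℝ)) (by norm_num) (by norm_num))
    have h2 := (h1.comp (tendsto_add_atTop_nat 1)).mul_const (C * 3)
    simpa using h2
  have h0 : ‖Q 0 - P 0‖ ≤ 0 := ge_of_tendsto htend (Eventually.of_forall key)
  have h1 := le_antisymm h0 (norm_nonneg _)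
  rwa [norm_eq_zero, sub_eq_zero] at h1

lemma aux_shift (P Q : ℕ → (X →L[𝕜] X))
    {C : ℝ} (hP : ∀ n, ‖P n‖ ≤ C) (hQ : ∀ n, ‖Q n‖ ≤ C)
    (heq : (∑' n : ℕ, ((1/3 : 𝕜) ^ n) • Q n) = ∑' n : ℕ, ((1/3 : 𝕜) ^ n) • P n)
    (h0 : Q 0 = P 0) :
    (∑' n : ℕ, ((1/3 : 𝕜) ^ n) • Q (n + 1)) = ∑' n : ℕ, ((1/3 : 𝕜) ^ n) • P (n + 1) := by
  have hsQ : Summable (fun n : ℕ => ((1/3 : 𝕜) ^ n) • Q n) := by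
    simpa using aux_summable Q hQ id (fun _ => le_rfl)
  have hsP : Summable (fun n : ℕ => ((1/3 : 𝕜) ^ n) • P n) := by
    simpa using aux_summable P hP id (fun _ => le_rfl)
  rw [Summable.tsum_eq_zero_add hsQ, Summable.tsum_eq_zero_add hsP] at heq
  simp only [pow_zero, one_smul] at heq
  rw [h0] at heq
  have heq2 : (∑' n : ℕ, ((1/3 : 𝕜) ^ (n+1)) • Q (n + 1))
      = ∑' n : ℕ, ((1/3 : 𝕜) ^ (n+1)) • P (n + 1) := add_left_cancel heq
  have hrw : ∀ (R : ℕ → (X →L[𝕜] X)),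
      (∑' n : ℕ, ((1/3 : 𝕜) ^ (n+1)) • R (n + 1))
        = (1/3 : 𝕜) • ∑' n : ℕ, ((1/3 : 𝕜) ^ n) • R (n + 1) := by
    intro R
    rw [← tsum_const_smul'' ((1/3 : 𝕜))]
    refine tsum_congr fun n => ?_
    rw [smul_smul, ← pow_succ']
  rw [hrw, hrw] at heq2
  exact smul_right_injective _ (by norm_num : (1/3 : 𝕜) ≠ 0) heq2

end aux

theorem stmt_14 {𝕜 X : Type*} [RCLike 𝕜] [NormedAddCommGroup X] [NormedSpace 𝕜 X]
    [CompleteSpace X]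
    (P Q : ℕ → (X →L[𝕜] X))
    (hPidem : ∀ n, P n * P n = P n) (hQidem : ∀ n, Q n * Q n = Q n)
    (hPorth : ∀ m n, m ≠ n → P m * P n = 0)
    (hQorth : ∀ m n, m ≠ n → Q m * Q n = 0)
    (hbdd : ∃ C : ℝ, (∀ n, ‖P n‖ ≤ C) ∧ (∀ n, ‖Q n‖ ≤ C))
    (heq : (∑' n : ℕ, ((1/3 : 𝕜) ^ n) • Q n) = ∑' n : ℕ, ((1/3 : 𝕜) ^ n) • P n) :
    ∀ n, Q n = P n := by
  obtain ⟨C, hP, hQ⟩ := hbdd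
  intro n
  induction n generalizing P Q with
  | zero => exact aux_head P Q hPidem hQidem hPorth hQorth hP hQ heq
  | succ n ih =>
    have h0 : Q 0 = P 0 := aux_head P Q hPidem hQidem hPorth hQorth hP hQ heq
    exact ih (fun m => P (m+1)) (fun m => Q (m+1))
      (fun m => hPidem (m+1)) (fun m => hQidem (m+1))
      (fun a b hab => hPorth (a+1) (b+1) (by omega))
      (fun a b hab => hQorth (a+1) (b+1) (by omega))
      (aux_shift P Q hP hQ heq h0)
      (fun m => hP (m+1)) (fun m => hQ (m+1))
end
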